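/- For every 0 ≤ m ≤ ⌊n/2⌋, every standard Young tableau Q of shape (n−m,m), and every 0 ≤ ℓ ≤ n−2m: ⟨f_Q^{m,ℓ}, f_Q^{m,ℓ}⟩_π = γ_Q · ⟨f_T^{m,ℓ}, f_T^{m,ℓ}⟩_π = γ_Q · (2^m/(n+1)) · Σ_{i=0}^{n−2m} (T_{m,n}^{(ℓ)}(i))² · C(n−2m,i)/C(n,m+i), where T is the column reading tableau. -/

import Mathlib

open Finset

attribute [local instance] Classical.propDecidable

/-- Stationary distribution of the binary Burnside process. -/
noncomputable def piDist (n : ℕ) (U : Finset ℕ) : ℝ :=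
  1 / ((n + 1) * (n.choose U.card))

/-- Binary Burnside transition matrix entry. -/
noncomputable def Kmat (n : ℕ) (x y : Finset ℕ) : ℝ :=
  (((2 * (n - (x ∪ y).card)).choose (n - (x ∪ y).card) : ℝ) *
      ((2 * ((y \ x).card)).choose ((y \ x).card)) *
      ((2 * ((x \ y).card)).choose ((x \ y).card)) *
      ((2 * ((x ∩ y).card)).choose ((x ∩ y).card))) /
    (4 ^ n * (((n - (x ∪ y).card) + (y \ x).card).choose (n - (x ∪ y).card)) *
      (((x \ y).card + (x ∩ y).card).choose ((x \ y).card)))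

/-- Action of K_n on functions. -/
noncomputable def Kop (n : ℕ) (f : Finset ℕ → ℝ) : Finset ℕ → ℝ :=
  fun x => ∑ y ∈ (Finset.Icc 1 n).powerset, Kmat n x y * f y

/-- s-step transition probabilities. -/
noncomputable def Kpow (n : ℕ) : ℕ → Finset ℕ → Finset ℕ → ℝ
  | 0 => fun x y => if x = y then 1 else 0
  | s + 1 => fun x y => ∑ z ∈ (Finset.Icc 1 n).powerset, Kmat n x z * Kpow n s z y

/-- Chi-square distance to stationarity after s steps, started at x. -/
noncomputable def chiSq (n s : ℕ) (x : Finset ℕ) : ℝ :=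
  ∑ y ∈ (Finset.Icc 1 n).powerset, (Kpow n s x y - piDist n y) ^ 2 / piDist n y

/-- Eigenvalues. -/
noncomputable def betaEV (k : ℕ) : ℝ := (((2 * k).choose k : ℝ)) ^ 2 / 16 ^ k

/-- The eigenvectors f_S of Diaconis–Lin–Ram. -/
noncomputable def fSvec (S : Finset ℕ) : Finset ℕ → ℝ :=
  fun U => (-1 : ℝ) ^ ((S ∩ U).card) * (S.card.choose ((S ∩ U).card))

/-- Inner product with respect to π. -/
noncomputable def innerPi (n : ℕ) (f g : Finset ℕ → ℝ) : ℝ :=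
  ∑ U ∈ (Finset.Icc 1 n).powerset, f U * g U * piDist n U

/-- The scalars T_{m,n}^{(ℓ)}(i). -/
noncomputable def Tcoef (n m ℓ i : ℕ) : ℝ :=
  ∑ j ∈ Finset.range (i + 1),
    if j ≤ ℓ then
      (-1 : ℝ) ^ (m + j) * ((2 * m + ℓ).choose (m + j)) * (i.choose j) *
        ((n - 2 * m - i).choose (ℓ - j))
    else 0

/-- The vector g_T^{m,i} associated to the column reading tableau. -/
noncomputable def gT (n m i : ℕ) : Finset ℕ → ℝ := fun U =>
  if (∀ r ∈ Finset.Icc 1 m, ((2 * r - 1 ∈ U) ↔ ¬(2 * r ∈ U))) ∧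
      (U ∩ Finset.Icc (2 * m + 1) n).card = i then
    (-1 : ℝ) ^ ((U ∩ (Finset.range m).image (fun r => 2 * r + 1)).card)
  else 0

/-- The vector f_T^{m,ℓ} associated to the column reading tableau. -/
noncomputable def fT (n m ℓ : ℕ) : Finset ℕ → ℝ :=
  fun U => ∑ i ∈ Finset.range (n - 2 * m + 1), Tcoef n m ℓ i * gT n m i U

/-- Action of the adjacent transposition s_t (switching t and t+1) on functions. -/
noncomputable def sOp (t : ℕ) (f : Finset ℕ → ℝ) : Finset ℕ → ℝ :=
  fun U => f (U.image (Equiv.swap t (t + 1)))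

/-- The factor s_t − 1/(t − 2r + 2) (r is the 1-indexed position in the second row). -/
noncomputable def tauFactor (r t : ℕ) (f : Finset ℕ → ℝ) : Finset ℕ → ℝ :=
  fun U => sOp t f U - ((t : ℝ) - 2 * r + 2)⁻¹ * f U

/-- Composition (s_{2r+k-1} − ⋯)⋯(s_{2r} − 1/2) of k successive factors. -/
noncomputable def tauComp (r : ℕ) : ℕ → (Finset ℕ → ℝ) → (Finset ℕ → ℝ)
  | 0 => id
  | k + 1 => fun f => tauFactor r (2 * r + k) (tauComp r k f)

/-- τ_Q^{(r)} τ_Q^{(r+1)} ⋯ for the remaining second-row entries. -/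
noncomputable def tauQAux : ℕ → List ℕ → (Finset ℕ → ℝ) → (Finset ℕ → ℝ)
  | _, [] => id
  | r, a :: rest => fun f => tauComp r (a - 2 * r) (tauQAux (r + 1) rest f)

/-- The operator τ_Q for a tableau Q encoded by its list of second-row entries. -/
noncomputable def tauQ (Q : List ℕ) : (Finset ℕ → ℝ) → (Finset ℕ → ℝ) := tauQAux 1 Q

/-- A standard Young tableau of shape (n − Q.length, Q.length), encoded by the strictly
increasing list of second-row entries, each entry a_r satisfying 2r ≤ a_r ≤ n. -/
def IsSYT (n : ℕ) (Q : List ℕ) : Prop :=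
  Q.Chain' (· < ·) ∧ (∀ x ∈ Q, x ≤ n) ∧ ∀ r < Q.length, 2 * (r + 1) ≤ Q.getD r 0

/-- The eigenvectors f_Q^{m,ℓ} (here m = Q.length). -/
noncomputable def fQvec (n : ℕ) (Q : List ℕ) (ℓ : ℕ) : Finset ℕ → ℝ :=
  tauQ Q (fT n Q.length ℓ)

/-- The orthogonal vectors g_Q^{m,i} (here m = Q.length). -/
noncomputable def gQvec (n : ℕ) (Q : List ℕ) (i : ℕ) : Finset ℕ → ℝ :=
  tauQ Q (gT n Q.length i)

/-- The constant γ_Q. -/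
noncomputable def gammaQ (Q : List ℕ) : ℝ :=
  ∏ r ∈ Finset.range Q.length, ∏ c ∈ Finset.Icc 2 (Q.getD r 0 - 2 * (r + 1) + 1),
    ((c : ℝ) ^ 2 - 1) / (c : ℝ) ^ 2

/-- The Murphy (Jucys–Murphy) operator M_r acting on functions. -/
noncomputable def murphy (r : ℕ) (f : Finset ℕ → ℝ) : Finset ℕ → ℝ :=
  fun U => ∑ i ∈ Finset.Icc 1 (r - 1), f (U.image (Equiv.swap i r))

/-- The state space as a finite type. -/
noncomputable def transpEndo (n a b : ℕ) :
    Module.End ℝ ((↥((Finset.Icc 1 n).powerset)) → ℝ) where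
  toFun f U := f (if h : U.1.image (Equiv.swap a b) ∈ (Finset.Icc 1 n).powerset
    then ⟨U.1.image (Equiv.swap a b), h⟩ else U)
  map_add' f g := rfl
  map_smul' c f := rfl

noncomputable def murphyEndo (n r : ℕ) :
    Module.End ℝ ((↥((Finset.Icc 1 n).powerset)) → ℝ) :=
  ∑ i ∈ Finset.Icc 1 (r - 1), transpEndo n i r

noncomputable def KEndo (n : ℕ) :
    Module.End ℝ ((↥((Finset.Icc 1 n).powerset)) → ℝ) where
  toFun f x := ∑ y : ↥((Finset.Icc 1 n).powerset), Kmat n x.1 y.1 * f y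
  map_add' f g := by funext x; simp [mul_add, Finset.sum_add_distrib]
  map_smul' c f := by funext x; simp [Finset.mul_sum, mul_left_comm]


section Aux
open Equiv

/-! ### Basic swap/image lemmas -/

lemma mem_image_swap {a b x : ℕ} {U : Finset ℕ} :
    x ∈ U.image (Equiv.swap a b) ↔ Equiv.swap a b x ∈ U := by
  simp only [Finset.mem_image]
  constructor
  · rintro ⟨y, hy, rfl⟩; simpa [Equiv.swap_apply_self] using hy
  · intro h; exact ⟨Equiv.swap a b x, h, Equiv.swap_apply_self _ _ _⟩

lemma image_swap_swap (a b : ℕ) (U : Finset ℕ) :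
    (U.image (Equiv.swap a b)).image (Equiv.swap a b) = U := by
  rw [Finset.image_image]
  have : (Equiv.swap a b) ∘ (Equiv.swap a b) = id := by
    funext x; simp [Function.comp, Equiv.swap_apply_self]
  simp [this]

lemma image_swap_of_iff {a b : ℕ} {U : Finset ℕ} (h : a ∈ U ↔ b ∈ U) :
    U.image (Equiv.swap a b) = U := by
  ext x
  rw [mem_image_swap]
  rcases eq_or_ne x a with rfl | hxa
  · rw [Equiv.swap_apply_left]; tauto
  rcases eq_or_ne x b with rfl | hxb
  · rw [Equiv.swap_apply_right]; tauto
  · rw [Equiv.swap_apply_of_ne_of_ne hxa hxb]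

lemma image_swap_of_mem {a b : ℕ} {U : Finset ℕ} (ha : a ∈ U) (hb : b ∉ U) :
    U.image (Equiv.swap a b) = insert b (U.erase a) := by
  have hab : a ≠ b := by rintro rfl; exact hb ha
  ext x
  rw [mem_image_swap, Finset.mem_insert, Finset.mem_erase]
  rcases eq_or_ne x a with rfl | hxa
  · rw [Equiv.swap_apply_left]; simp [hab, hb]
  rcases eq_or_ne x b with rfl | hxb
  · rw [Equiv.swap_apply_right]; simp [ha]
  · rw [Equiv.swap_apply_of_ne_of_ne hxa hxb]; simp [hxa, hxb]

lemma card_image_swap (a b : ℕ) (U : Finset ℕ) :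
    (U.image (Equiv.swap a b)).card = U.card :=
  Finset.card_image_of_injective _ (Equiv.injective _)

/-! ### innerPi basic lemmas -/

lemma innerPi_comm (n : ℕ) (f g : Finset ℕ → ℝ) : innerPi n f g = innerPi n g f := by
  unfold innerPi; exact Finset.sum_congr rfl fun U _ => by ring

lemma innerPi_smul_left (n : ℕ) (a : ℝ) (f g : Finset ℕ → ℝ) :
    innerPi n (fun U => a * f U) g = a * innerPi n f g := by
  unfold innerPi; rw [Finset.mul_sum]; exact Finset.sum_congr rfl fun U _ => by ring

lemma innerPi_sub_left (n : ℕ) (f f' g : Finset ℕ → ℝ) :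
    innerPi n (fun U => f U - f' U) g = innerPi n f g - innerPi n f' g := by
  unfold innerPi; rw [← Finset.sum_sub_distrib]
  exact Finset.sum_congr rfl fun U _ => by ring

lemma innerPi_sub_right (n : ℕ) (f g g' : Finset ℕ → ℝ) :
    innerPi n f (fun U => g U - g' U) = innerPi n f g - innerPi n f g' := by
  unfold innerPi; rw [← Finset.sum_sub_distrib]
  exact Finset.sum_congr rfl fun U _ => by ring

lemma innerPi_sum_left (n : ℕ) {ι : Type*} (s : Finset ι) (F : ι → Finset ℕ → ℝ)
    (g : Finset ℕ → ℝ) :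
    innerPi n (fun U => ∑ i ∈ s, F i U) g = ∑ i ∈ s, innerPi n (F i) g := by
  unfold innerPi
  rw [Finset.sum_comm]
  refine Finset.sum_congr rfl fun U _ => ?_
  dsimp only
  rw [Finset.sum_mul, Finset.sum_mul]

lemma innerPi_sum_right (n : ℕ) {ι : Type*} (s : Finset ι) (f : Finset ℕ → ℝ)
    (G : ι → Finset ℕ → ℝ) :
    innerPi n f (fun U => ∑ i ∈ s, G i U) = ∑ i ∈ s, innerPi n f (G i) := by
  rw [innerPi_comm, innerPi_sum_left]
  exact Finset.sum_congr rfl fun i _ => innerPi_comm ..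

lemma swap_mem_powerset {n a b : ℕ} (ha1 : 1 ≤ a) (han : a ≤ n) (hb1 : 1 ≤ b) (hbn : b ≤ n)
    {U : Finset ℕ} (hU : U ∈ (Finset.Icc 1 n).powerset) :
    U.image (Equiv.swap a b) ∈ (Finset.Icc 1 n).powerset := by
  rw [Finset.mem_powerset] at hU ⊢
  intro x hx
  rw [mem_image_swap] at hx
  have := hU hx
  rcases eq_or_ne x a with rfl | hxa
  · simp [Finset.mem_Icc]; omega
  rcases eq_or_ne x b with rfl | hxb
  · simp [Finset.mem_Icc]; omega
  · rwa [Equiv.swap_apply_of_ne_of_ne hxa hxb] at this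

lemma innerPi_swap {n a b : ℕ} (ha1 : 1 ≤ a) (han : a ≤ n) (hb1 : 1 ≤ b) (hbn : b ≤ n)
    (f g : Finset ℕ → ℝ) :
    innerPi n (fun U => f (U.image (Equiv.swap a b))) g
      = innerPi n f (fun U => g (U.image (Equiv.swap a b))) := by
  unfold innerPi
  refine Finset.sum_nbij' (fun U => U.image (Equiv.swap a b))
    (fun U => U.image (Equiv.swap a b)) ?_ ?_ ?_ ?_ ?_
  · intro U hU; exact swap_mem_powerset ha1 han hb1 hbn hU
  · intro U hU; exact swap_mem_powerset ha1 han hb1 hbn hU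
  · intro U _; exact image_swap_swap a b U
  · intro U _; exact image_swap_swap a b U
  · intro U _
    dsimp only
    rw [image_swap_swap]
    unfold piDist
    rw [card_image_swap]

/-! ### murphy lemmas -/

lemma innerPi_murphy {n r : ℕ} (hrn : r ≤ n) (hr1 : 1 ≤ r) (f g : Finset ℕ → ℝ) :
    innerPi n (murphy r f) g = innerPi n f (murphy r g) := by
  unfold murphy
  rw [innerPi_sum_left]
  have : ∀ i ∈ Finset.Icc 1 (r - 1),
      innerPi n (fun U => f (U.image (Equiv.swap i r))) g
        = innerPi n f (fun U => g (U.image (Equiv.swap i r))) := by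
    intro i hi
    rw [Finset.mem_Icc] at hi
    exact innerPi_swap hi.1 (by omega) hr1 hrn f g
  rw [Finset.sum_congr rfl this, ← innerPi_sum_right]

lemma swap_conj_gen (t u i : ℕ) (hu : u ≠ t) (hu' : u ≠ t + 1) :
    (Equiv.swap t (t+1)) ∘ (Equiv.swap i u)
      = (Equiv.swap (Equiv.swap t (t+1) i) u) ∘ (Equiv.swap t (t+1)) := by
  have h := Equiv.swap_apply_apply (Equiv.swap t (t+1)) i u
  rw [Equiv.swap_apply_of_ne_of_ne hu hu'] at h
  funext x
  have := congrArg (fun e => (e : Equiv.Perm ℕ) ((Equiv.swap t (t+1)) x)) h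
  simp only [Equiv.Perm.mul_apply, Equiv.Perm.inv_def, Equiv.symm_apply_apply] at this
  simp only [Function.comp]
  exact this.symm

lemma swap_conj_eq (t i : ℕ) (hi : i ≠ t) (hi' : i ≠ t + 1) :
    (Equiv.swap t (t+1)) ∘ (Equiv.swap i t) = (Equiv.swap i (t+1)) ∘ (Equiv.swap t (t+1)) := by
  have h := Equiv.swap_apply_apply (Equiv.swap t (t+1)) i t
  rw [Equiv.swap_apply_of_ne_of_ne hi hi', Equiv.swap_apply_left] at h
  funext x
  have := congrArg (fun e => (e : Equiv.Perm ℕ) ((Equiv.swap t (t+1)) x)) h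
  simp only [Equiv.Perm.mul_apply, Equiv.Perm.inv_def, Equiv.symm_apply_apply] at this
  simp only [Function.comp]
  exact this.symm

lemma murphy_succ (t : ℕ) (ht : 1 ≤ t) (f : Finset ℕ → ℝ) (U : Finset ℕ) :
    murphy (t+1) f U = murphy t (sOp t f) (U.image (Equiv.swap t (t+1)))
      + f (U.image (Equiv.swap t (t+1))) := by
  obtain ⟨t', rfl⟩ : ∃ t', t = t' + 1 := ⟨t - 1, by omega⟩
  unfold murphy sOp
  simp only [Nat.add_sub_cancel]
  rw [Finset.sum_Icc_succ_top (by omega : 1 ≤ t' + 1)]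
  congr 1
  refine Finset.sum_congr rfl fun i hi => ?_
  rw [Finset.mem_Icc] at hi
  congr 1
  rw [Finset.image_image, Finset.image_image]
  congr 1
  funext x
  simp only [Function.comp]
  have := congrFun (swap_conj_eq (t'+1) i (by omega) (by omega))
    ((Equiv.swap (t'+1) (t'+1+1)) x)
  simp only [Function.comp] at this
  rw [this, Equiv.swap_apply_self]

lemma murphy_sOp_comm (t u : ℕ) (ht : 1 ≤ t) (hut : u ≠ t) (hut' : u ≠ t + 1)
    (f : Finset ℕ → ℝ) :
    murphy u (sOp t f) = sOp t (murphy u f) := by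
  funext U
  unfold murphy sOp
  refine Finset.sum_nbij' (fun i => Equiv.swap t (t+1) i) (fun i => Equiv.swap t (t+1) i)
    ?_ ?_ ?_ ?_ ?_
  · intro J hJ
    rw [Finset.mem_Icc] at hJ ⊢
    rcases eq_or_ne J t with rfl | h1
    · rw [Equiv.swap_apply_left]; omega
    rcases eq_or_ne J (t+1) with rfl | h2
    · rw [Equiv.swap_apply_right]; omega
    · rw [Equiv.swap_apply_of_ne_of_ne h1 h2]; omega
  · intro J hJ
    rw [Finset.mem_Icc] at hJ ⊢
    rcases eq_or_ne J t with rfl | h1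
    · rw [Equiv.swap_apply_left]; omega
    rcases eq_or_ne J (t+1) with rfl | h2
    · rw [Equiv.swap_apply_right]; omega
    · rw [Equiv.swap_apply_of_ne_of_ne h1 h2]; omega
  · intro J _; exact Equiv.swap_apply_self _ _ _
  · intro J _; exact Equiv.swap_apply_self _ _ _
  · intro i hi
    rw [Finset.mem_Icc] at hi
    congr 1
    rw [Finset.image_image, Finset.image_image,
      swap_conj_gen t u i (by omega) (by omega), ← Finset.image_image]

/-! ### The key step lemma for a single tau factor -/

lemma sOp_sOp (t : ℕ) (f : Finset ℕ → ℝ) : sOp t (sOp t f) = f := by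
  funext U; unfold sOp; rw [image_swap_swap]

lemma murphy_linear (u : ℕ) (c : ℝ) (f g : Finset ℕ → ℝ) :
    murphy u (fun U => f U - c * g U) = fun U => murphy u f U - c * murphy u g U := by
  funext U; unfold murphy
  rw [Finset.sum_sub_distrib, Finset.mul_sum]

lemma tauFactor_eq (r t : ℕ) (g : Finset ℕ → ℝ) :
    tauFactor r t g = fun U => sOp t g U - ((t : ℝ) - 2 * r + 2)⁻¹ * g U := rfl

lemma tauFactor_step (n r t : ℕ) (g : Finset ℕ → ℝ) (lam : ℕ → ℝ)
    (ht1 : 1 ≤ t) (htn : t + 1 ≤ n)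
    (heig : ∀ u, 1 ≤ u → u ≤ n → murphy u g = fun U => lam u * g U)
    (hc : lam (t+1) - lam t = (t:ℝ) - 2*r + 2) (hc0 : (t:ℝ) - 2*r + 2 ≠ 0) :
    (∀ u, 1 ≤ u → u ≤ n → murphy u (tauFactor r t g) = fun U =>
       (if u = t then lam (t+1) else if u = t+1 then lam t else lam u) * tauFactor r t g U)
    ∧ innerPi n (tauFactor r t g) (tauFactor r t g)
       = (1 - (((t:ℝ) - 2*r + 2)⁻¹)^2) * innerPi n g g := by
  have hl : lam (t+1) = lam t + ((t:ℝ) - 2*r + 2) := by linarith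
  have hMt : murphy t (sOp t g) = fun U => lam (t+1) * sOp t g U - g U := by
    funext U
    have h1 := murphy_succ t ht1 g (U.image (Equiv.swap t (t+1)))
    rw [image_swap_swap] at h1
    have h2 := congrFun (heig (t+1) (by omega) htn) (U.image (Equiv.swap t (t+1)))
    have h3 : sOp t g U = g (U.image (Equiv.swap t (t+1))) := rfl
    rw [h3]
    linarith [h1, h2]
  have hMt1 : murphy (t+1) (sOp t g) = fun U => lam t * sOp t g U + g U := by
    funext U
    have h1 := murphy_succ t ht1 (sOp t g) U
    rw [sOp_sOp] at h1
    have h2 := congrFun (heig t ht1 (by omega)) (U.image (Equiv.swap t (t+1)))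
    have h3 : sOp t g U = g (U.image (Equiv.swap t (t+1))) := rfl
    have h4 : sOp t g (U.image (Equiv.swap t (t+1))) = g U := by
      show g ((U.image (Equiv.swap t (t+1))).image (Equiv.swap t (t+1))) = g U
      rw [image_swap_swap]
    rw [h3]
    linarith [h1, h2, h4]
  have hHt : murphy t (tauFactor r t g) = fun U => lam (t+1) * tauFactor r t g U := by
    rw [tauFactor_eq, murphy_linear]
    funext U
    rw [hMt, heig t ht1 (by omega)]
    dsimp only
    rw [hl]
    field_simp
    ring
  have hHt1 : murphy (t+1) (tauFactor r t g) = fun U => lam t * tauFactor r t g U := by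
    rw [tauFactor_eq, murphy_linear]
    funext U
    rw [hMt1, heig (t+1) (by omega) htn]
    dsimp only
    rw [hl]
    field_simp
    ring
  have hHo : ∀ u, 1 ≤ u → u ≤ n → u ≠ t → u ≠ t + 1 →
      murphy u (tauFactor r t g) = fun U => lam u * tauFactor r t g U := by
    intro u hu1 hun hut hut'
    rw [tauFactor_eq, murphy_linear]
    funext U
    rw [murphy_sOp_comm t u ht1 hut hut', heig u hu1 hun]
    dsimp only
    have h3 : sOp t (fun U => lam u * g U) U = lam u * sOp t g U := rfl
    rw [h3]
    ring
  have heigH : ∀ u, 1 ≤ u → u ≤ n → murphy u (tauFactor r t g) = fun U =>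
      (if u = t then lam (t+1) else if u = t+1 then lam t else lam u) * tauFactor r t g U := by
    intro u hu1 hun
    rcases eq_or_ne u t with rfl | hut
    · simpa using hHt
    rcases eq_or_ne u (t+1) with rfl | hut'
    · simp only [if_neg hut, if_pos rfl]
      exact hHt1
    · simp only [if_neg hut, if_neg hut']
      exact hHo u hu1 hun hut hut'
  refine ⟨heigH, ?_⟩
  have hgh : innerPi n g (tauFactor r t g) = 0 := by
    have e1 : innerPi n (murphy t g) (tauFactor r t g)
        = innerPi n g (murphy t (tauFactor r t g)) :=
      innerPi_murphy (by omega) ht1 g (tauFactor r t g)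
    rw [heig t ht1 (by omega), hHt] at e1
    rw [innerPi_smul_left] at e1
    rw [innerPi_comm n g (fun U => lam (t+1) * tauFactor r t g U), innerPi_smul_left,
      innerPi_comm n (tauFactor r t g) g] at e1
    have e2 : (lam (t+1) - lam t) * innerPi n g (tauFactor r t g) = 0 := by linarith
    rw [hc] at e2
    exact (mul_eq_zero.1 e2).resolve_left hc0
  have hgs : innerPi n g (sOp t g)
      = ((t:ℝ) - 2*r + 2)⁻¹ * innerPi n g g := by
    have hexp : innerPi n g (tauFactor r t g)
        = innerPi n g (sOp t g) - ((t:ℝ) - 2*r + 2)⁻¹ * innerPi n g g := by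
      rw [tauFactor_eq, innerPi_sub_right]
      congr 1
      rw [innerPi_comm n g (fun U => ((t:ℝ) - 2*r + 2)⁻¹ * g U), innerPi_smul_left,
        innerPi_comm n g g]
    rw [hgh] at hexp
    linarith
  have e1 : innerPi n (tauFactor r t g) (tauFactor r t g)
      = innerPi n (tauFactor r t g) (sOp t g)
        - ((t:ℝ) - 2*r + 2)⁻¹ * innerPi n (tauFactor r t g) g := by
    nth_rewrite 2 [tauFactor_eq]
    rw [innerPi_sub_right]
    congr 1
    rw [innerPi_comm n (tauFactor r t g) (fun U => ((t:ℝ) - 2*r + 2)⁻¹ * g U),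
      innerPi_smul_left, innerPi_comm n g (tauFactor r t g)]
  have e2 : innerPi n (tauFactor r t g) g = 0 := by
    rw [innerPi_comm]; exact hgh
  have e3 : innerPi n (tauFactor r t g) (sOp t g)
      = innerPi n (sOp t (tauFactor r t g)) g := by
    exact (innerPi_swap ht1 (by omega) (by omega) htn (tauFactor r t g) g).symm
  have hsh : sOp t (tauFactor r t g) = fun U => g U - ((t:ℝ) - 2*r + 2)⁻¹ * sOp t g U := by
    funext U
    show tauFactor r t g (U.image (Equiv.swap t (t+1))) = _
    rw [tauFactor_eq]
    dsimp only
    have : g ((U.image (Equiv.swap t (t+1))).image (Equiv.swap t (t+1))) = g U := by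
      rw [image_swap_swap]
    show g ((U.image (Equiv.swap t (t+1))).image (Equiv.swap t (t+1)))
        - ((t:ℝ) - 2*r + 2)⁻¹ * g (U.image (Equiv.swap t (t+1))) = _
    rw [this]
    rfl
  have e4 : innerPi n (sOp t (tauFactor r t g)) g
      = innerPi n g g - ((t:ℝ) - 2*r + 2)⁻¹ * innerPi n (sOp t g) g := by
    rw [hsh, innerPi_sub_left]
    congr 1
    rw [innerPi_smul_left]
  have e5 : innerPi n (sOp t g) g = ((t:ℝ) - 2*r + 2)⁻¹ * innerPi n g g := by
    rw [innerPi_comm]; exact hgs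
  rw [e1, e2, e3, e4, e5]
  ring

/-! ### tauComp induction -/

lemma tauComp_step (n r : ℕ) (hr : 1 ≤ r) : ∀ (k : ℕ) (g : Finset ℕ → ℝ) (lam : ℕ → ℝ),
    2*r + k ≤ n →
    (∀ u, 1 ≤ u → u ≤ n → murphy u g = fun U => lam u * g U) →
    (∀ u, 2*r < u → u ≤ 2*r + k → lam u = lam (2*r) + ((u - 2*r : ℕ) : ℝ) + 1) →
    (∀ u, 1 ≤ u → u ≤ n → murphy u (tauComp r k g) = fun U =>
      (if u = 2*r + k then lam (2*r) else if 2*r ≤ u ∧ u < 2*r + k then lam (u+1) else lam u)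
        * tauComp r k g U)
    ∧ innerPi n (tauComp r k g) (tauComp r k g)
      = (∏ c ∈ Finset.Icc 2 (k+1), (((c:ℝ)^2 - 1) / (c:ℝ)^2)) * innerPi n g g := by
  intro k
  induction k with
  | zero =>
    intro g lam hn heig _
    have h0 : tauComp r 0 g = g := rfl
    rw [h0]
    constructor
    · intro u hu1 hun
      rw [heig u hu1 hun]
      funext U
      congr 1
      rcases eq_or_ne u (2*r) with rfl | h
      · simp
      · rw [if_neg (by omega), if_neg (by omega)]
    · show innerPi n g g = _
      rw [show Finset.Icc 2 (0+1) = (∅ : Finset ℕ) by rfl]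
      rw [Finset.prod_empty, one_mul]
  | succ k ih =>
    intro g lam hn heig hwin
    obtain ⟨IHe, IHn⟩ := ih g lam (by omega) heig
      (fun u h1 h2 => hwin u h1 (by omega))
    have hfact := tauFactor_step n r (2*r+k) (tauComp r k g)
      (fun u => if u = 2*r + k then lam (2*r)
        else if 2*r ≤ u ∧ u < 2*r + k then lam (u+1) else lam u)
      (by omega) (by omega) IHe
      (by
        rw [if_neg (by omega), if_neg (by omega), if_pos rfl]
        rw [hwin (2*r+k+1) (by omega) (by omega)]
        push_cast [show 2*r+k+1-2*r = k+1 by omega]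
        ring)
      (by push_cast; intro h; have hk : (0:ℝ) ≤ (k:ℝ) := Nat.cast_nonneg k; linarith)
    obtain ⟨He, Hn⟩ := hfact
    have htc : tauComp r (k+1) g = tauFactor r (2*r+k) (tauComp r k g) := rfl
    constructor
    · intro u hu1 hun
      rw [htc, He u hu1 hun]
      funext U
      congr 1
      split_ifs <;> first | rfl | (congr 1; omega) | (exfalso; omega)
    · rw [htc, Hn, IHn]
      rw [Finset.prod_Icc_succ_top (by omega : 2 ≤ k+1+1)]
      have hc : ((2*r+k : ℕ) : ℝ) - 2*r + 2 = ((k:ℝ) + 2) := by push_cast; ring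
      rw [hc]
      have h2 : ((k:ℝ)+2) ≠ 0 := by positivity
      have : (1 - (((k:ℝ)+2)⁻¹)^2) = (((k+1+1:ℕ):ℝ)^2 - 1)/((k+1+1:ℕ):ℝ)^2 := by
        push_cast
        field_simp
        ring
      rw [this]
      ring

/-! ### gT is a Murphy eigenvector -/

noncomputable def lamT (m u : ℕ) : ℝ :=
  if u ≤ 2*m then (if u % 2 = 0 then (u:ℝ)/2 - 2 else ((u:ℝ)+1)/2 - 1)
  else (u:ℝ) - m - 1

lemma lamT_even {m r u : ℕ} (h : u = 2*r) (h2 : r ≤ m) : lamT m u = (r:ℝ) - 2 := by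
  subst h
  rw [lamT, if_pos (by omega), if_pos (by omega)]
  push_cast
  ring

lemma lamT_odd {m r u : ℕ} (h : u = 2*r+1) (h2 : r < m) : lamT m u = (r:ℝ) := by
  subst h
  rw [lamT, if_pos (by omega), if_neg (by omega)]
  push_cast
  ring

lemma lamT_tail {m u : ℕ} (h : 2*m < u) : lamT m u = (u:ℝ) - m - 1 := by
  rw [lamT, if_neg (by omega)]

lemma mem_oddset {m x : ℕ} :
    x ∈ (Finset.range m).image (fun r => 2*r+1) ↔ x % 2 = 1 ∧ x < 2*m := by
  simp only [Finset.mem_image, Finset.mem_range]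
  constructor
  · rintro ⟨r, hr, rfl⟩; omega
  · rintro ⟨h1, h2⟩; exact ⟨(x-1)/2, by omega, by omega⟩

lemma gT_eq_zero_of_pair {n m i s : ℕ} (hs1 : 1 ≤ s) (hsm : s ≤ m) (U : Finset ℕ)
    (h : (2*s-1 ∈ U) ↔ (2*s ∈ U)) : gT n m i U = 0 := by
  simp only [gT]
  rw [if_neg]
  rintro ⟨h1, -⟩
  have := h1 s (Finset.mem_Icc.2 ⟨hs1, hsm⟩)
  tauto

lemma gT_pair_flip (n m i s : ℕ) (hs1 : 1 ≤ s) (hsm : s ≤ m) (U : Finset ℕ) :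
    gT n m i (U.image (Equiv.swap (2*s-1) (2*s))) = - gT n m i U := by
  set V := U.image (Equiv.swap (2*s-1) (2*s)) with hV
  have hmem : ∀ x, x ≠ 2*s-1 → x ≠ 2*s → (x ∈ V ↔ x ∈ U) := by
    intro x hx1 hx2
    rw [hV, mem_image_swap, Equiv.swap_apply_of_ne_of_ne hx1 hx2]
  have hm1 : 2*s-1 ∈ V ↔ 2*s ∈ U := by
    rw [hV, mem_image_swap, Equiv.swap_apply_left]
  have hm2 : 2*s ∈ V ↔ 2*s-1 ∈ U := by
    rw [hV, mem_image_swap, Equiv.swap_apply_right]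
  have hS : V ∩ Finset.Icc (2*m+1) n = U ∩ Finset.Icc (2*m+1) n := by
    ext x
    by_cases hx : x ∈ Finset.Icc (2*m+1) n
    · simp only [Finset.mem_inter, hx, and_true]
      rw [Finset.mem_Icc] at hx
      exact hmem x (by omega) (by omega)
    · simp [hx]
  have hpair : (∀ r ∈ Finset.Icc 1 m, ((2*r-1 ∈ V) ↔ ¬(2*r ∈ V)))
      ↔ (∀ r ∈ Finset.Icc 1 m, ((2*r-1 ∈ U) ↔ ¬(2*r ∈ U))) := by
    refine forall₂_congr fun r hr => ?_
    rw [Finset.mem_Icc] at hr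
    rcases eq_or_ne r s with rfl | hrs
    · rw [hm1, hm2]; tauto
    · rw [hmem _ (by omega) (by omega), hmem _ (by omega) (by omega)]
  by_cases hc : (∀ r ∈ Finset.Icc 1 m, ((2*r-1 ∈ U) ↔ ¬(2*r ∈ U)))
      ∧ (U ∩ Finset.Icc (2*m+1) n).card = i
  · have hcV : (∀ r ∈ Finset.Icc 1 m, ((2*r-1 ∈ V) ↔ ¬(2*r ∈ V)))
        ∧ (V ∩ Finset.Icc (2*m+1) n).card = i := ⟨hpair.2 hc.1, by rw [hS]; exact hc.2⟩
    simp only [gT]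
    rw [if_pos hcV, if_pos hc]
    have hps := hc.1 s (Finset.mem_Icc.2 ⟨hs1, hsm⟩)
    set O := (Finset.range m).image (fun r => 2*r+1) with hO
    have hsO : 2*s-1 ∈ O := mem_oddset.2 ⟨by omega, by omega⟩
    by_cases h1 : 2*s-1 ∈ U
    · have h2 : 2*s ∉ U := by tauto
      have hVO : V ∩ O = (U ∩ O).erase (2*s-1) := by
        ext x
        rcases eq_or_ne x (2*s-1) with rfl | hx
        · simp only [Finset.mem_inter, Finset.mem_erase, ne_eq, not_true_eq_false,
            false_and, iff_false, not_and]
          intro hxV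
          exact absurd (hm1.1 hxV) h2
        · simp only [Finset.mem_inter, Finset.mem_erase, hx, ne_eq, not_false_eq_true,
            true_and]
          by_cases hxO : x ∈ O
          · have hodd := mem_oddset.1 (hO ▸ hxO)
            rw [hmem x hx (by omega)]
          · simp [hxO]
      rw [hVO, Finset.card_erase_of_mem (Finset.mem_inter.2 ⟨h1, hsO⟩)]
      obtain ⟨c, hcc⟩ : ∃ c, (U ∩ O).card = c + 1 := by
        have : 0 < (U ∩ O).card := Finset.card_pos.2 ⟨2*s-1, Finset.mem_inter.2 ⟨h1, hsO⟩⟩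
        exact ⟨(U ∩ O).card - 1, by omega⟩
      rw [hcc]
      simp [pow_succ]
    · have h2 : 2*s ∈ U := by tauto
      have hVO : V ∩ O = insert (2*s-1) (U ∩ O) := by
        ext x
        rcases eq_or_ne x (2*s-1) with rfl | hx
        · simp only [Finset.mem_inter, Finset.mem_insert, true_or, iff_true]
          exact ⟨hm1.2 h2, hsO⟩
        · simp only [Finset.mem_inter, Finset.mem_insert, hx, false_or]
          by_cases hxO : x ∈ O
          · have hodd := mem_oddset.1 (hO ▸ hxO)
            rw [hmem x hx (by omega)]
          · simp [hxO]
      rw [hVO, Finset.card_insert_of_notMem (fun hmm => h1 (Finset.mem_inter.1 hmm).1)]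
      simp [pow_succ]
  · simp only [gT]
    rw [if_neg (fun hcV => hc ⟨hpair.1 hcV.1, by rw [← hS]; exact hcV.2⟩), if_neg hc]
    ring

lemma gT_tail_swap (n m i j u : ℕ) (hj : 2*m < j) (hju : j ≠ u) (hjn : j ≤ n)
    (hu2 : 2*m < u) (hun : u ≤ n) (U : Finset ℕ) :
    gT n m i (U.image (Equiv.swap j u)) = gT n m i U := by
  set V := U.image (Equiv.swap j u) with hV
  have hmem : ∀ x, x ≠ j → x ≠ u → (x ∈ V ↔ x ∈ U) := by
    intro x hx1 hx2
    rw [hV, mem_image_swap, Equiv.swap_apply_of_ne_of_ne hx1 hx2]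
  have hSfix : (Finset.Icc (2*m+1) n).image (Equiv.swap j u) = Finset.Icc (2*m+1) n :=
    image_swap_of_iff (by simp only [Finset.mem_Icc]; omega)
  have hS : V ∩ Finset.Icc (2*m+1) n = (U ∩ Finset.Icc (2*m+1) n).image (Equiv.swap j u) := by
    rw [hV, ← hSfix, ← Finset.image_inter U (Finset.Icc (2*m+1) n) (Equiv.injective _), hSfix]
  have hcard : (V ∩ Finset.Icc (2*m+1) n).card = (U ∩ Finset.Icc (2*m+1) n).card := by
    rw [hS, card_image_swap]
  have hO : V ∩ (Finset.range m).image (fun r => 2*r+1)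
      = U ∩ (Finset.range m).image (fun r => 2*r+1) := by
    ext x
    by_cases hxO : x ∈ (Finset.range m).image (fun r => 2*r+1)
    · have hodd := mem_oddset.1 hxO
      simp only [Finset.mem_inter, hxO, and_true]
      exact hmem x (by omega) (by omega)
    · simp [hxO]
  have hpair : ∀ r, 1 ≤ r → r ≤ m → ((2*r-1 ∈ V ↔ 2*r-1 ∈ U) ∧ (2*r ∈ V ↔ 2*r ∈ U)) := by
    intro r h1 h2
    exact ⟨hmem _ (by omega) (by omega), hmem _ (by omega) (by omega)⟩
  have hcond : ((∀ r ∈ Finset.Icc 1 m, ((2*r-1 ∈ V) ↔ ¬(2*r ∈ V)))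
        ∧ (V ∩ Finset.Icc (2*m+1) n).card = i)
      ↔ ((∀ r ∈ Finset.Icc 1 m, ((2*r-1 ∈ U) ↔ ¬(2*r ∈ U)))
        ∧ (U ∩ Finset.Icc (2*m+1) n).card = i) := by
    rw [hcard]
    refine and_congr ?_ Iff.rfl
    refine forall₂_congr fun r hr => ?_
    rw [Finset.mem_Icc] at hr
    rw [(hpair r hr.1 hr.2).1, (hpair r hr.1 hr.2).2]
  simp only [gT]
  by_cases hc : (∀ r ∈ Finset.Icc 1 m, ((2*r-1 ∈ U) ↔ ¬(2*r ∈ U)))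
      ∧ (U ∩ Finset.Icc (2*m+1) n).card = i
  · rw [if_pos (hcond.2 hc), if_pos hc, hO]
  · rw [if_neg (fun h => hc (hcond.1 h)), if_neg hc]

lemma gT_pair_sum (n m i s u : ℕ) (hs1 : 1 ≤ s) (hsm : s ≤ m) (hu : 2*s < u) (U : Finset ℕ) :
    gT n m i (U.image (Equiv.swap (2*s-1) u)) + gT n m i (U.image (Equiv.swap (2*s) u))
      = gT n m i U := by
  have hne1 : (2*s-1 : ℕ) ≠ u := by omega
  have hne2 : (2*s : ℕ) ≠ u := by omega
  have hne3 : (2*s-1 : ℕ) ≠ 2*s := by omega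
  by_cases h1 : 2*s-1 ∈ U <;> by_cases h2 : 2*s ∈ U <;> by_cases hu' : u ∈ U
  · -- both in pair, u in: V₁ = V₂ = U, gT U = 0
    rw [image_swap_of_iff (by tauto), image_swap_of_iff (by tauto),
      gT_eq_zero_of_pair hs1 hsm U (by tauto)]
    ring
  · -- both in pair, u out: cancellation
    rw [image_swap_of_mem h1 hu', image_swap_of_mem h2 hu']
    have hmA : 2*s ∈ insert u (U.erase (2*s-1)) := by
      rw [Finset.mem_insert, Finset.mem_erase]
      exact Or.inr ⟨by omega, h2⟩
    have hmB : 2*s-1 ∉ insert u (U.erase (2*s-1)) := by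
      rw [Finset.mem_insert, Finset.mem_erase]
      push_neg
      exact ⟨by omega, fun h => absurd rfl h⟩
    have hveq : insert u (U.erase (2*s)) =
        (insert u (U.erase (2*s-1))).image (Equiv.swap (2*s-1) (2*s)) := by
      rw [Equiv.swap_comm (2*s-1) (2*s), image_swap_of_mem hmA hmB]
      ext x
      simp only [Finset.mem_insert, Finset.mem_erase]
      constructor
      · rintro (rfl | ⟨hxs, hxU⟩)
        · exact Or.inr ⟨by omega, Or.inl rfl⟩
        · by_cases hx : x = 2*s-1
          · exact Or.inl hx
          · exact Or.inr ⟨hxs, Or.inr ⟨hx, hxU⟩⟩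
      · rintro (rfl | ⟨hxs, (rfl | ⟨hx1, hxU⟩)⟩)
        · exact Or.inr ⟨by omega, h1⟩
        · exact Or.inl rfl
        · exact Or.inr ⟨hxs, hxU⟩
    rw [hveq, gT_pair_flip n m i s hs1 hsm _,
      gT_eq_zero_of_pair hs1 hsm U (by tauto)]
    ring
  · -- 2s-1 in, 2s out, u in: V₁ = U, V₂ zero
    rw [image_swap_of_iff (Iff.intro (fun _ => hu') (fun _ => h1)),
      Equiv.swap_comm (2*s) u, image_swap_of_mem hu' h2]
    have hz : gT n m i (insert (2*s) (U.erase u)) = 0 := by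
      refine gT_eq_zero_of_pair hs1 hsm _ (iff_of_true ?_ ?_)
      · rw [Finset.mem_insert, Finset.mem_erase]
        exact Or.inr ⟨by omega, h1⟩
      · exact Finset.mem_insert_self _ _
    rw [hz]
    ring
  · -- 2s-1 in, 2s out, u out: V₂ = U, V₁ zero
    rw [image_swap_of_mem h1 hu', image_swap_of_iff (Iff.intro (fun h => absurd h h2)
      (fun h => absurd h hu'))]
    have hz : gT n m i (insert u (U.erase (2*s-1))) = 0 := by
      refine gT_eq_zero_of_pair hs1 hsm _ (iff_of_false ?_ ?_)
      · rw [Finset.mem_insert, Finset.mem_erase]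
        push_neg
        exact ⟨by omega, fun h => absurd rfl h⟩
      · rw [Finset.mem_insert, Finset.mem_erase]
        push_neg
        exact ⟨by omega, fun _ => h2⟩
    rw [hz]
    ring
  · -- 2s-1 out, 2s in, u in: V₂ = U, V₁ zero
    rw [Equiv.swap_comm (2*s-1) u, image_swap_of_mem hu' h1,
      image_swap_of_iff (Iff.intro (fun _ => hu') (fun _ => h2))]
    have hz : gT n m i (insert (2*s-1) (U.erase u)) = 0 := by
      refine gT_eq_zero_of_pair hs1 hsm _ (iff_of_true ?_ ?_)
      · exact Finset.mem_insert_self _ _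
      · rw [Finset.mem_insert, Finset.mem_erase]
        exact Or.inr ⟨by omega, h2⟩
    rw [hz]
    ring
  · -- 2s-1 out, 2s in, u out: V₁ = U, V₂ zero
    rw [image_swap_of_iff (Iff.intro (fun h => absurd h h1) (fun h => absurd h hu')),
      image_swap_of_mem h2 hu']
    have hz : gT n m i (insert u (U.erase (2*s))) = 0 := by
      refine gT_eq_zero_of_pair hs1 hsm _ (iff_of_false ?_ ?_)
      · rw [Finset.mem_insert, Finset.mem_erase]
        push_neg
        exact ⟨by omega, fun _ => h1⟩
      · rw [Finset.mem_insert, Finset.mem_erase]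
        push_neg
        exact ⟨by omega, fun h => absurd rfl h⟩
    rw [hz]
    ring
  · -- both out, u in: cancellation
    rw [Equiv.swap_comm (2*s-1) u, Equiv.swap_comm (2*s) u,
      image_swap_of_mem hu' h1, image_swap_of_mem hu' h2]
    have hmA : 2*s-1 ∈ insert (2*s-1) (U.erase u) := Finset.mem_insert_self _ _
    have hmB : 2*s ∉ insert (2*s-1) (U.erase u) := by
      rw [Finset.mem_insert, Finset.mem_erase]
      push_neg
      exact ⟨by omega, fun _ => h2⟩
    have hveq : insert (2*s) (U.erase u) =
        (insert (2*s-1) (U.erase u)).image (Equiv.swap (2*s-1) (2*s)) := by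
      rw [image_swap_of_mem hmA hmB,
        Finset.erase_insert (by rw [Finset.mem_erase]; push_neg; exact fun _ => h1)]
    rw [hveq, gT_pair_flip n m i s hs1 hsm _,
      gT_eq_zero_of_pair hs1 hsm U (by tauto)]
    ring
  · -- all out
    rw [image_swap_of_iff (by tauto), image_swap_of_iff (by tauto),
      gT_eq_zero_of_pair hs1 hsm U (by tauto)]
    ring

lemma gT_prefix_sum (n m i u : ℕ) (U : Finset ℕ) :
    ∀ k, k ≤ m → 2*k < u →
    ∑ j ∈ Finset.Icc 1 (2*k), gT n m i (U.image (Equiv.swap j u))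
      = (k : ℝ) * gT n m i U := by
  intro k
  induction k with
  | zero => intro _ _; simp
  | succ k ih =>
    intro hk hu
    rw [show 2*(k+1) = 2*k+1+1 by omega]
    rw [Finset.sum_Icc_succ_top (by omega), Finset.sum_Icc_succ_top (by omega)]
    rw [ih (by omega) (by omega)]
    have hps := gT_pair_sum n m i (k+1) u (by omega) hk (by omega) U
    rw [show 2*(k+1)-1 = 2*k+1 by omega, show 2*(k+1) = 2*k+1+1 by omega] at hps
    push_cast
    linarith

lemma murphy_gT (n m i u : ℕ) (hm : 2*m ≤ n) (hu1 : 1 ≤ u) (hun : u ≤ n) :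
    murphy u (gT n m i) = fun U => lamT m u * gT n m i U := by
  funext U
  show ∑ j ∈ Finset.Icc 1 (u-1), gT n m i (U.image (Equiv.swap j u)) = _
  by_cases hcase : u ≤ 2*m
  · rcases Nat.even_or_odd u with ⟨r, hr⟩ | ⟨r, hr⟩
    · -- u = 2r
      have hru : u = 2*r := by omega
      have hr1 : 1 ≤ r := by omega
      have hrm : r ≤ m := by omega
      rw [show u - 1 = 2*(r-1)+1 by omega]
      rw [Finset.sum_Icc_succ_top (by omega)]
      rw [gT_prefix_sum n m i u U (r-1) (by omega) (by omega)]
      have hflip := gT_pair_flip n m i r hr1 hrm U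
      rw [show 2*r-1 = 2*(r-1)+1 by omega] at hflip
      rw [show 2*r = u by omega] at hflip
      rw [hflip, lamT_even hru hrm]
      push_cast [show ((r : ℕ) - 1 : ℕ) = r - 1 from rfl]
      have : ((r - 1 : ℕ) : ℝ) = (r:ℝ) - 1 := by
        have : 1 ≤ r := hr1
        push_cast [Nat.cast_sub this]
        ring
      rw [this]
      ring
    · -- u = 2r+1, r < m
      have hrm : r < m := by omega
      rw [show u - 1 = 2*r by omega]
      rw [gT_prefix_sum n m i u U r (by omega) (by omega)]
      rw [lamT_odd hr hrm]
  · -- u > 2m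
    push_neg at hcase
    have hsplit : Finset.Icc 1 (u-1) = Finset.Icc 1 (2*m) ∪ Finset.Icc (2*m+1) (u-1) := by
      ext x
      simp only [Finset.mem_union, Finset.mem_Icc]
      omega
    rw [hsplit, Finset.sum_union (by
      rw [Finset.disjoint_left]
      intro x hx hx'
      rw [Finset.mem_Icc] at hx hx'
      omega)]
    rw [gT_prefix_sum n m i u U m (le_refl m) (by omega)]
    have htail : ∑ j ∈ Finset.Icc (2*m+1) (u-1), gT n m i (U.image (Equiv.swap j u))
        = ((u - 1 - 2*m : ℕ) : ℝ) * gT n m i U := by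
      have hterm : ∀ j ∈ Finset.Icc (2*m+1) (u-1),
          gT n m i (U.image (Equiv.swap j u)) = gT n m i U := by
        intro j hj
        rw [Finset.mem_Icc] at hj
        exact gT_tail_swap n m i j u (by omega) (by omega) (by omega) hcase hun U
      rw [Finset.sum_congr rfl hterm, Finset.sum_const, Nat.card_Icc, nsmul_eq_mul,
        show u - 1 + 1 - (2*m+1) = u - 1 - 2*m by omega]
    rw [htail, lamT_tail hcase]
    have hcast : ((u - 1 - 2*m : ℕ) : ℝ) = (u:ℝ) - 1 - 2*(m:ℝ) := by
      rw [show u - 1 - 2*m = u - (2*m+1) by omega]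
      rw [Nat.cast_sub (by omega)]
      push_cast
      ring
    rw [hcast]
    ring

lemma murphy_fT (n m ℓ u : ℕ) (hm : 2*m ≤ n) (hu1 : 1 ≤ u) (hun : u ≤ n) :
    murphy u (fT n m ℓ) = fun U => lamT m u * fT n m ℓ U := by
  funext U
  show ∑ j ∈ Finset.Icc 1 (u-1), fT n m ℓ (U.image (Equiv.swap j u)) = _
  unfold fT
  rw [Finset.sum_comm]
  have h1 : ∀ i ∈ Finset.range (n - 2*m + 1),
      ∑ j ∈ Finset.Icc 1 (u-1), Tcoef n m ℓ i * gT n m i (U.image (Equiv.swap j u))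
        = Tcoef n m ℓ i * (lamT m u * gT n m i U) := by
    intro i _
    rw [← Finset.mul_sum]
    congr 1
    have := congrFun (murphy_gT n m i u hm hu1 hun) U
    unfold murphy at this
    rw [this]
  rw [Finset.sum_congr rfl h1, Finset.mul_sum]
  exact Finset.sum_congr rfl fun i _ => by ring

/-! ### tauQAux induction with muF bookkeeping -/

noncomputable def muF (m r : ℕ) (L : List ℕ) (u : ℕ) : ℝ :=
  if u ∈ L then (r:ℝ) + (L.idxOf u : ℕ) - 2
  else if u ≤ 2*r - 1 then lamT m u
  else (u:ℝ) - r - (L.countP (fun b => decide (b < u)) : ℕ)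

noncomputable def gamAux : ℕ → List ℕ → ℝ
  | _, [] => 1
  | r, a :: rest =>
    (∏ c ∈ Finset.Icc 2 (a - 2*r + 1), (((c:ℝ)^2 - 1)/(c:ℝ)^2)) * gamAux (r+1) rest

lemma muF_nil (m u : ℕ) : muF m (m+1) [] u = lamT m u := by
  rw [muF]
  simp only [List.not_mem_nil, if_false]
  by_cases h : u ≤ 2*(m+1) - 1
  · rw [if_pos h]
  · rw [if_neg h, lamT, if_neg (by omega)]
    simp only [List.countP_nil, Nat.cast_zero]
    push_cast
    ring

lemma tauQAux_step (n m : ℕ) (hmn : 2*m ≤ n) :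
    ∀ (L : List ℕ) (r : ℕ) (f : Finset ℕ → ℝ),
    1 ≤ r → r + L.length = m + 1 →
    L.Chain' (· < ·) → (∀ x ∈ L, x ≤ n) →
    (∀ j, j < L.length → 2*(r+j) ≤ L.getD j 0) →
    (∀ u, 1 ≤ u → u ≤ n → murphy u f = fun U => lamT m u * f U) →
    (∀ u, 1 ≤ u → u ≤ n → murphy u (tauQAux r L f) = fun U => muF m r L u * tauQAux r L f U)
    ∧ innerPi n (tauQAux r L f) (tauQAux r L f) = gamAux r L * innerPi n f f := by
  intro L
  induction L with
  | nil =>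
    intro r f hr1 hlen _ _ _ heig
    have hrm : r = m + 1 := by simpa using hlen
    subst hrm
    have htq : tauQAux (m+1) [] f = f := rfl
    rw [htq]
    constructor
    · intro u h1 h2
      rw [muF_nil, heig u h1 h2]
    · rw [show gamAux (m+1) [] = 1 from rfl, one_mul]
  | cons a rest ih =>
    intro r f hr1 hlen hchain hle hget heig
    have hlen' : (r+1) + rest.length = m + 1 := by simp at hlen; omega
    have hp := List.isChain_iff_pairwise.mp hchain
    obtain ⟨hrest_gt, hpr⟩ := List.pairwise_cons.mp hp
    have hchain' : rest.Chain' (· < ·) := List.isChain_iff_pairwise.mpr hpr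
    have ha2r : 2*r ≤ a := by
      have := hget 0 (by simp)
      simpa using this
    have han : a ≤ n := hle a (by simp)
    have hr_le_m : r ≤ m := by omega
    obtain ⟨IHe, IHn⟩ := ih (r+1) f (by omega) hlen' hchain'
      (fun x hx => hle x (by simp [hx]))
      (fun j hj => by
        have := hget (j+1) (by simp; omega)
        rw [List.getD_cons_succ] at this
        calc 2*(r+1+j) = 2*(r+(j+1)) := by ring
          _ ≤ _ := this)
      heig
    have htq : tauQAux r (a :: rest) f = tauComp r (a - 2*r) (tauQAux (r+1) rest f) := rfl
    have h2rnot : (2*r) ∉ rest := fun h => by have := hrest_gt _ h; omega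
    have hmu2r : muF m (r+1) rest (2*r) = (r:ℝ) - 2 := by
      rw [muF, if_neg h2rnot, if_pos (by omega)]
      exact lamT_even rfl hr_le_m
    have hwin : ∀ u, 2*r < u → u ≤ 2*r + (a - 2*r) →
        muF m (r+1) rest u = muF m (r+1) rest (2*r) + ((u - 2*r : ℕ) : ℝ) + 1 := by
      intro u hu1 hu2
      have hua : u ≤ a := by omega
      have hunotin : u ∉ rest := fun h => by have := hrest_gt _ h; omega
      rw [hmu2r, muF, if_neg hunotin]
      by_cases hsmall : u ≤ 2*(r+1) - 1
      · have hu' : u = 2*r+1 := by omega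
        rw [if_pos hsmall, hu', show (2*r+1) - 2*r = 1 by omega]
        by_cases hrm : r < m
        · rw [lamT_odd rfl hrm]
          push_cast
          ring
        · have hreq : r = m := by omega
          rw [lamT_tail (by omega)]
          push_cast
          rw [hreq]
          push_cast
          ring
      · rw [if_neg hsmall]
        have hcount : rest.countP (fun b => decide (b < u)) = 0 := by
          rw [List.countP_eq_zero]
          intro x hx
          have := hrest_gt x hx
          simp only [decide_eq_true_eq]
          omega
        rw [hcount, Nat.cast_sub (by omega : 2*r ≤ u)]
        push_cast
        ring
    obtain ⟨Ce, Cn⟩ := tauComp_step n r hr1 (a - 2*r) (tauQAux (r+1) rest f)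
      (muF m (r+1) rest) (by omega) IHe hwin
    constructor
    · intro u h1 h2
      rw [htq, Ce u h1 h2]
      funext U
      congr 1
      rw [show 2*r + (a - 2*r) = a by omega]
      rcases eq_or_ne u a with rfl | hua
      · rw [if_pos rfl, hmu2r, muF, if_pos (List.mem_cons_self),
          List.idxOf_cons_self]
        push_cast
        ring
      by_cases hurest : u ∈ rest
      · have hau : a < u := hrest_gt u hurest
        rw [if_neg hua, if_neg (show ¬(2*r ≤ u ∧ u < a) by omega), muF, if_pos hurest, muF,
          if_pos (List.mem_cons_of_mem a hurest),
          List.idxOf_cons_ne rest (Ne.symm hua)]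
        push_cast
        ring
      have hunotL : u ∉ (a :: rest) := by
        intro h
        rcases List.mem_cons.mp h with h' | h'
        · exact hua h'
        · exact hurest h'
      by_cases hlow : u ≤ 2*r - 1
      · rw [if_neg hua, if_neg (show ¬(2*r ≤ u ∧ u < a) by omega), muF, if_neg hurest,
          if_pos (show u ≤ 2*(r+1) - 1 by omega), muF, if_neg hunotL, if_pos hlow]
      by_cases hmid : 2*r ≤ u ∧ u < a
      · rw [if_neg hua, if_pos hmid]
        have hw := hwin (u+1) (by omega) (by omega)
        rw [hmu2r] at hw
        rw [hw, muF, if_neg hunotL, if_neg hlow]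
        have hcount : (a :: rest).countP (fun b => decide (b < u)) = 0 := by
          rw [List.countP_eq_zero]
          intro x hx
          simp only [decide_eq_true_eq]
          rcases List.mem_cons.mp hx with rfl | h'
          · omega
          · have := hrest_gt x h'; omega
        rw [hcount, Nat.cast_sub (by omega : 2*r ≤ u + 1)]
        push_cast
        ring
      · -- u > a, u ∉ L
        have h2ru : 2*r ≤ u := by omega
        have hau : a < u := by
          rcases Nat.lt_or_ge u a with h | h
          · exact absurd ⟨h2ru, h⟩ hmid
          · omega
        rw [if_neg hua, if_neg hmid]
        have hcons : (a :: rest).countP (fun b => decide (b < u))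
            = rest.countP (fun b => decide (b < u)) + 1 :=
          by rw [List.countP_cons]
             simp only [decide_eq_true_eq]
             rw [if_pos hau]
        rw [muF, if_neg hurest, muF, if_neg hunotL,
          if_neg (show ¬ u ≤ 2*r - 1 by omega), hcons]
        by_cases hsmall : u ≤ 2*(r+1) - 1
        · have hu' : u = 2*r+1 := by omega
          have hcount : rest.countP (fun b => decide (b < u)) = 0 := by
            rw [List.countP_eq_zero]
            intro x hx
            have := hrest_gt x hx
            simp only [decide_eq_true_eq]
            omega
          rw [if_pos hsmall, hcount]
          by_cases hrm : r < m
          · rw [hu', lamT_odd rfl hrm]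
            push_cast
            ring
          · have hreq : r = m := by omega
            rw [hu', lamT_tail (by omega)]
            push_cast
            all_goals rw [hreq]
            all_goals push_cast
            all_goals ring
        · rw [if_neg hsmall]
          push_cast
          ring
    · rw [htq, Cn, IHn]
      rw [show gamAux r (a :: rest)
        = (∏ c ∈ Finset.Icc 2 (a - 2*r + 1), (((c:ℝ)^2 - 1)/(c:ℝ)^2)) * gamAux (r+1) rest
        from rfl]
      ring

lemma gamAux_eq (L : List ℕ) : ∀ r, gamAux r L
    = ∏ j ∈ Finset.range L.length,
        ∏ c ∈ Finset.Icc 2 (L.getD j 0 - 2*(r+j) + 1), (((c:ℝ)^2-1)/(c:ℝ)^2) := by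
  induction L with
  | nil => intro r; simp [gamAux]
  | cons a rest ih =>
    intro r
    rw [show gamAux r (a :: rest)
      = (∏ c ∈ Finset.Icc 2 (a - 2*r + 1), (((c:ℝ)^2 - 1)/(c:ℝ)^2)) * gamAux (r+1) rest
      from rfl]
    rw [ih (r+1), List.length_cons, Finset.prod_range_succ']
    rw [mul_comm]
    congr 1
    · refine Finset.prod_congr rfl fun j _ => ?_
      simp only [List.getD_cons_succ, show r+1+j = r+(j+1) from by omega]

lemma gammaQ_eq_gamAux (Q : List ℕ) : gammaQ Q = gamAux 1 Q := by
  rw [gammaQ, gamAux_eq Q 1]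
  refine Finset.prod_congr rfl fun j _ => ?_
  simp only [show (1:ℕ)+j = j+1 from by omega]

/-! ### Part 2: norm of fT -/

lemma gT_orth (n m i j : ℕ) (h : i ≠ j) (U : Finset ℕ) :
    gT n m i U * gT n m j U = 0 := by
  simp only [gT]
  split_ifs with h1 h2
  · exact absurd (h1.2.symm.trans h2.2) h
  all_goals ring

lemma card_pair_prefix (m : ℕ) (U : Finset ℕ)
    (hpair : ∀ r ∈ Finset.Icc 1 m, ((2*r-1 ∈ U) ↔ ¬(2*r ∈ U))) :
    ∀ k, k ≤ m → (U ∩ Finset.Icc 1 (2*k)).card = k := by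
  intro k
  induction k with
  | zero => intro _; simp
  | succ k ih =>
    intro hk
    have hsplit : U ∩ Finset.Icc 1 (2*(k+1))
        = (U ∩ Finset.Icc 1 (2*k)) ∪ (U ∩ Finset.Icc (2*k+1) (2*k+2)) := by
      ext x
      simp only [Finset.mem_inter, Finset.mem_union, Finset.mem_Icc]
      by_cases hxU : x ∈ U
      · simp only [hxU, true_and]; omega
      · simp [hxU]
    rw [hsplit, Finset.card_union_of_disjoint (by
      rw [Finset.disjoint_left]
      intro x hx hx'
      simp only [Finset.mem_inter, Finset.mem_Icc] at hx hx'
      omega)]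
    rw [ih (by omega)]
    have hone := hpair (k+1) (Finset.mem_Icc.2 ⟨by omega, hk⟩)
    rw [show 2*(k+1)-1 = 2*k+1 by omega, show 2*(k+1) = 2*k+2 by omega] at hone
    by_cases h : 2*k+1 ∈ U
    · have h2 : 2*k+2 ∉ U := by tauto
      have hset : U ∩ Finset.Icc (2*k+1) (2*k+2) = {2*k+1} := by
        ext x
        simp only [Finset.mem_inter, Finset.mem_Icc, Finset.mem_singleton]
        constructor
        · rintro ⟨hxU, hx1, hx2⟩
          have : x = 2*k+1 ∨ x = 2*k+2 := by omega
          rcases this with rfl | rfl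
          · rfl
          · exact absurd hxU h2
        · rintro rfl; exact ⟨h, by omega, by omega⟩
      rw [hset, Finset.card_singleton]
    · have h2 : 2*k+2 ∈ U := by tauto
      have hset : U ∩ Finset.Icc (2*k+1) (2*k+2) = {2*k+2} := by
        ext x
        simp only [Finset.mem_inter, Finset.mem_Icc, Finset.mem_singleton]
        constructor
        · rintro ⟨hxU, hx1, hx2⟩
          have : x = 2*k+1 ∨ x = 2*k+2 := by omega
          rcases this with rfl | rfl
          · exact absurd hxU h
          · rfl
        · rintro rfl; exact ⟨h2, by omega, by omega⟩
      rw [hset, Finset.card_singleton]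

lemma card_of_cond (n m i : ℕ) (U : Finset ℕ) (hU : U ⊆ Finset.Icc 1 n)
    (hpair : ∀ r ∈ Finset.Icc 1 m, ((2*r-1 ∈ U) ↔ ¬(2*r ∈ U)))
    (hcard : (U ∩ Finset.Icc (2*m+1) n).card = i) : U.card = m + i := by
  have hsplit : U = (U ∩ Finset.Icc 1 (2*m)) ∪ (U ∩ Finset.Icc (2*m+1) n) := by
    ext x
    simp only [Finset.mem_union, Finset.mem_inter, Finset.mem_Icc]
    by_cases hxU : x ∈ U
    · simp only [hxU, true_and, iff_true_intro hxU, true_iff]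
      have := hU hxU
      rw [Finset.mem_Icc] at this
      omega
    · simp [hxU]
  conv_lhs => rw [hsplit]
  rw [Finset.card_union_of_disjoint (by
    rw [Finset.disjoint_left]
    intro x hx hx'
    simp only [Finset.mem_inter, Finset.mem_Icc] at hx hx'
    omega)]
  rw [card_pair_prefix m U hpair m le_rfl, hcard]

noncomputable def psiW (m : ℕ) (A B : Finset ℕ) : Finset ℕ :=
  (A.image (fun r => 2*r-1)) ∪ ((Finset.Icc 1 m \ A).image (fun r => 2*r)) ∪ B

lemma mem_psiW {m x : ℕ} {A B : Finset ℕ} :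
    x ∈ psiW m A B ↔ (∃ r ∈ A, 2*r-1 = x) ∨ (∃ r ∈ Finset.Icc 1 m \ A, 2*r = x) ∨ x ∈ B := by
  simp [psiW, Finset.mem_union, Finset.mem_image, or_assoc]

lemma psiW_odd {m : ℕ} {A B : Finset ℕ} (hA : A ⊆ Finset.Icc 1 m)
    (hBlow : ∀ b ∈ B, 2*m < b)
    (r : ℕ) (h1 : 1 ≤ r) (h2 : r ≤ m) : (2*r-1 ∈ psiW m A B) ↔ r ∈ A := by
  rw [mem_psiW]
  constructor
  · rintro (⟨r', hr', heq⟩ | ⟨r', hr', heq⟩ | hb)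
    · have := hA hr'
      rw [Finset.mem_Icc] at this
      have : r' = r := by omega
      subst this; exact hr'
    · rw [Finset.mem_sdiff, Finset.mem_Icc] at hr'
      omega
    · have := hBlow _ hb
      omega
  · intro h
    exact Or.inl ⟨r, h, rfl⟩

lemma psiW_even {m : ℕ} {A B : Finset ℕ} (hA : A ⊆ Finset.Icc 1 m)
    (hBlow : ∀ b ∈ B, 2*m < b)
    (r : ℕ) (h1 : 1 ≤ r) (h2 : r ≤ m) : (2*r ∈ psiW m A B) ↔ r ∉ A := by
  rw [mem_psiW]
  constructor
  · rintro (⟨r', hr', heq⟩ | ⟨r', hr', heq⟩ | hb)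
    · have := hA hr'
      rw [Finset.mem_Icc] at this
      omega
    · rw [Finset.mem_sdiff, Finset.mem_Icc] at hr'
      have : r' = r := by omega
      subst this; exact hr'.2
    · have := hBlow _ hb
      omega
  · intro h
    exact Or.inr (Or.inl ⟨r, Finset.mem_sdiff.2 ⟨Finset.mem_Icc.2 ⟨h1, h2⟩, h⟩, rfl⟩)

lemma psiW_tail {n m : ℕ} {A B : Finset ℕ} (hA : A ⊆ Finset.Icc 1 m)
    (hB : B ⊆ Finset.Icc (2*m+1) n) :
    psiW m A B ∩ Finset.Icc (2*m+1) n = B := by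
  ext x
  rw [Finset.mem_inter, mem_psiW]
  constructor
  · rintro ⟨(⟨r', hr', heq⟩ | ⟨r', hr', heq⟩ | hb), hx⟩
    · have := hA hr'
      rw [Finset.mem_Icc] at this hx
      omega
    · rw [Finset.mem_sdiff, Finset.mem_Icc] at hr'
      rw [Finset.mem_Icc] at hx
      omega
    · exact hb
  · intro hb
    exact ⟨Or.inr (Or.inr hb), hB hb⟩

lemma psiW_sub {n m : ℕ} {A B : Finset ℕ} (hm : 2*m ≤ n) (hA : A ⊆ Finset.Icc 1 m)
    (hB : B ⊆ Finset.Icc (2*m+1) n) :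
    psiW m A B ⊆ Finset.Icc 1 n := by
  intro x hx
  rw [mem_psiW] at hx
  rw [Finset.mem_Icc]
  rcases hx with ⟨r', hr', heq⟩ | ⟨r', hr', heq⟩ | hb
  · have := hA hr'
    rw [Finset.mem_Icc] at this
    omega
  · rw [Finset.mem_sdiff, Finset.mem_Icc] at hr'
    omega
  · have := hB hb
    rw [Finset.mem_Icc] at this
    omega

lemma card_support (n m i : ℕ) (hm : 2*m ≤ n) :
    ((Finset.Icc 1 n).powerset.filter (fun U =>
      (∀ r ∈ Finset.Icc 1 m, ((2*r-1 ∈ U) ↔ ¬(2*r ∈ U)))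
        ∧ (U ∩ Finset.Icc (2*m+1) n).card = i)).card
    = 2^m * (n - 2*m).choose i := by
  have hcardA : ((Finset.Icc 1 m).powerset ×ˢ (Finset.Icc (2*m+1) n).powersetCard i).card
      = 2^m * (n-2*m).choose i := by
    rw [Finset.card_product, Finset.card_powerset, Nat.card_Icc,
      Finset.card_powersetCard, Nat.card_Icc, show m+1-1 = m by omega,
      show n+1-(2*m+1) = n-2*m by omega]
  rw [← hcardA]
  have hBlow : ∀ (B : Finset ℕ), B ⊆ Finset.Icc (2*m+1) n → ∀ b ∈ B, 2*m < b := by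
    intro B hB b hb
    have := hB hb
    rw [Finset.mem_Icc] at this
    omega
  refine Finset.card_bij'
    (fun U _ => ((Finset.Icc 1 m).filter (fun r => 2*r-1 ∈ U), U ∩ Finset.Icc (2*m+1) n))
    (fun p _ => psiW m p.1 p.2) ?_ ?_ ?_ ?_
  · -- maps into product
    intro U hU
    obtain ⟨hcond1, hcond2⟩ := (Finset.mem_filter.1 hU).2
    rw [Finset.mem_product]
    constructor
    · exact Finset.mem_powerset.2 (Finset.filter_subset _ _)
    · exact Finset.mem_powersetCard.2 ⟨Finset.inter_subset_right, hcond2⟩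
  · -- psiW lands in filter
    rintro ⟨A, B⟩ hp
    rw [Finset.mem_product] at hp
    have hA : A ⊆ Finset.Icc 1 m := Finset.mem_powerset.1 hp.1
    obtain ⟨hB, hBcard⟩ := Finset.mem_powersetCard.1 hp.2
    rw [Finset.mem_filter]
    refine ⟨Finset.mem_powerset.2 (psiW_sub hm hA hB), ?_, ?_⟩
    · intro r hr
      rw [Finset.mem_Icc] at hr
      rw [psiW_odd hA (hBlow B hB) r hr.1 hr.2,
        psiW_even hA (hBlow B hB) r hr.1 hr.2]
      tauto
    · rw [psiW_tail hA hB, hBcard]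
  · -- left inverse
    intro U hU
    have hU' := Finset.mem_powerset.1 (Finset.mem_filter.1 hU).1
    obtain ⟨hpair, hcard⟩ := (Finset.mem_filter.1 hU).2
    have hA : (Finset.Icc 1 m).filter (fun r => 2*r-1 ∈ U) ⊆ Finset.Icc 1 m :=
      Finset.filter_subset _ _
    have hB : U ∩ Finset.Icc (2*m+1) n ⊆ Finset.Icc (2*m+1) n := Finset.inter_subset_right
    dsimp only
    ext x
    by_cases hx : x ∈ Finset.Icc 1 n
    · rw [Finset.mem_Icc] at hx
      by_cases hx2 : x ≤ 2*m
      · rcases Nat.even_or_odd x with ⟨r, hr⟩ | ⟨r, hr⟩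
        · have hx' : x = 2*r := by omega
          subst hx'
          rw [psiW_even hA (hBlow _ hB) r (by omega) (by omega)]
          have hp := hpair r (Finset.mem_Icc.2 ⟨by omega, by omega⟩)
          have hmem : r ∈ (Finset.Icc 1 m).filter (fun r => 2*r-1 ∈ U) ↔ 2*r-1 ∈ U := by
            rw [Finset.mem_filter, Finset.mem_Icc]
            constructor
            · exact fun h => h.2
            · exact fun h => ⟨⟨by omega, by omega⟩, h⟩
          rw [hmem]
          tauto
        · have hx' : x = 2*(r+1)-1 := by omega
          subst hx'
          rw [psiW_odd hA (hBlow _ hB) (r+1) (by omega) (by omega)]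
          rw [Finset.mem_filter, Finset.mem_Icc]
          constructor
          · exact fun h => h.2
          · exact fun h => ⟨⟨by omega, by omega⟩, h⟩
      · rw [mem_psiW]
        constructor
        · rintro (⟨r', hr', heq⟩ | ⟨r', hr', heq⟩ | hb)
          · have := hA hr'
            rw [Finset.mem_Icc] at this
            omega
          · rw [Finset.mem_sdiff, Finset.mem_Icc] at hr'
            omega
          · exact (Finset.mem_inter.1 hb).1
        · intro hxU
          exact Or.inr (Or.inr (Finset.mem_inter.2 ⟨hxU, Finset.mem_Icc.2 ⟨by omega, by omega⟩⟩))
    · constructor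
      · intro h
        exact absurd (psiW_sub hm hA hB h) hx
      · intro h
        exact absurd (hU' h) hx
  · -- right inverse
    rintro ⟨A, B⟩ hp
    rw [Finset.mem_product] at hp
    have hA : A ⊆ Finset.Icc 1 m := Finset.mem_powerset.1 hp.1
    obtain ⟨hB, hBcard⟩ := Finset.mem_powersetCard.1 hp.2
    dsimp only
    have hc1 : (Finset.Icc 1 m).filter (fun r => 2*r-1 ∈ psiW m A B) = A := by
      ext r
      rw [Finset.mem_filter, Finset.mem_Icc]
      constructor
      · rintro ⟨hr, hmem⟩
        exact (psiW_odd hA (hBlow B hB) r hr.1 hr.2).1 hmem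
      · intro hrA
        have := hA hrA
        rw [Finset.mem_Icc] at this
        exact ⟨this, (psiW_odd hA (hBlow B hB) r this.1 this.2).2 hrA⟩
    rw [hc1, psiW_tail hA hB]

/-! ### Value of ⟨gT,gT⟩ and ⟨fT,fT⟩ -/

lemma innerPi_gT (n m i : ℕ) (hm : 2*m ≤ n) :
    innerPi n (gT n m i) (gT n m i)
      = ((2:ℝ)^m * ((n-2*m).choose i)) / (((n:ℝ)+1) * (n.choose (m+i))) := by
  unfold innerPi
  have hterm : ∀ U ∈ (Finset.Icc 1 n).powerset,
      gT n m i U * gT n m i U * piDist n U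
        = if (∀ r ∈ Finset.Icc 1 m, ((2*r-1 ∈ U) ↔ ¬(2*r ∈ U)))
            ∧ (U ∩ Finset.Icc (2*m+1) n).card = i
          then (1 / (((n:ℝ)+1) * (n.choose (m+i)))) else 0 := by
    intro U hU
    by_cases hc : (∀ r ∈ Finset.Icc 1 m, ((2*r-1 ∈ U) ↔ ¬(2*r ∈ U)))
        ∧ (U ∩ Finset.Icc (2*m+1) n).card = i
    · rw [if_pos hc]
      simp only [gT]
      rw [if_pos hc]
      have hcard : U.card = m + i :=
        card_of_cond n m i U (Finset.mem_powerset.1 hU) hc.1 hc.2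
      have hone : ((-1:ℝ))^((U ∩ (Finset.range m).image (fun r => 2*r+1)).card)
          * ((-1:ℝ))^((U ∩ (Finset.range m).image (fun r => 2*r+1)).card) = 1 := by
        rw [← pow_add]
        exact Even.neg_one_pow ⟨_, rfl⟩
      rw [hone, one_mul, piDist, hcard]
    · rw [if_neg hc]
      simp only [gT]
      rw [if_neg hc]
      ring
  rw [Finset.sum_congr rfl hterm, ← Finset.sum_filter, Finset.sum_const,
    card_support n m i hm, nsmul_eq_mul]
  push_cast
  ring

lemma innerPi_fT_expand (n m ℓ : ℕ) :
    innerPi n (fT n m ℓ) (fT n m ℓ)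
      = ∑ i ∈ Finset.range (n-2*m+1),
          (Tcoef n m ℓ i)^2 * innerPi n (gT n m i) (gT n m i) := by
  have hfT : fT n m ℓ = fun U => ∑ i ∈ Finset.range (n-2*m+1),
      Tcoef n m ℓ i * gT n m i U := rfl
  have h1 : innerPi n (fT n m ℓ) (fT n m ℓ)
      = ∑ i ∈ Finset.range (n-2*m+1), Tcoef n m ℓ i * innerPi n (gT n m i) (fT n m ℓ) := by
    nth_rewrite 1 [hfT]
    rw [innerPi_sum_left]
    exact Finset.sum_congr rfl fun i _ => innerPi_smul_left n _ _ _
  rw [h1]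
  refine Finset.sum_congr rfl fun i hi => ?_
  have h2 : innerPi n (gT n m i) (fT n m ℓ)
      = ∑ j ∈ Finset.range (n-2*m+1), Tcoef n m ℓ j * innerPi n (gT n m i) (gT n m j) := by
    nth_rewrite 1 [hfT]
    rw [innerPi_sum_right]
    refine Finset.sum_congr rfl fun j _ => ?_
    rw [innerPi_comm, innerPi_smul_left, innerPi_comm]
  rw [h2, Finset.sum_eq_single i]
  · ring
  · intro j _ hne
    have hz : innerPi n (gT n m i) (gT n m j) = 0 := by
      unfold innerPi
      refine Finset.sum_eq_zero fun U _ => ?_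
      rw [gT_orth n m i j (Ne.symm hne) U, zero_mul]
    rw [hz, mul_zero]
  · intro h
    exact absurd hi h

lemma innerPi_fT_val (n m ℓ : ℕ) (hm : 2*m ≤ n) :
    innerPi n (fT n m ℓ) (fT n m ℓ)
      = ((2:ℝ)^m / ((n:ℝ)+1)) * ∑ i ∈ Finset.range (n-2*m+1),
          (Tcoef n m ℓ i)^2 * (((n-2*m).choose i : ℝ) / (n.choose (m+i))) := by
  rw [innerPi_fT_expand, Finset.mul_sum]
  refine Finset.sum_congr rfl fun i hi => ?_
  rw [innerPi_gT n m i hm, ← div_div]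
  ring

/-- norm formula ⟨f_Q^{m,ℓ}, f_Q^{m,ℓ}⟩_π = γ_Q ⟨f_T^{m,ℓ}, f_T^{m,ℓ}⟩_π
= γ_Q (2^m/(n+1)) Σ_i (T_{m,n}^{(ℓ)}(i))² C(n−2m,i)/C(n,m+i). -/
theorem fQ_norm (n m ℓ : ℕ) (Q : List ℕ) (hm : 2 * m ≤ n) (hQm : Q.length = m)
    (hQ : IsSYT n Q) (hℓ : ℓ ≤ n - 2 * m) :
    innerPi n (fQvec n Q ℓ) (fQvec n Q ℓ) = gammaQ Q * innerPi n (fT n m ℓ) (fT n m ℓ) ∧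
    innerPi n (fQvec n Q ℓ) (fQvec n Q ℓ) =
      gammaQ Q * (2 ^ m / (n + 1)) *
        ∑ i ∈ Finset.range (n - 2 * m + 1),
          (Tcoef n m ℓ i) ^ 2 * (((n - 2 * m).choose i : ℝ) / (n.choose (m + i))) := by
  subst hQm
  obtain ⟨hchain, hle, hget⟩ := hQ
  have key := (tauQAux_step n Q.length hm Q 1 (fT n Q.length ℓ) le_rfl (by omega) hchain hle
    (fun j hj => by
      have := hget j hj
      calc 2*(1+j) = 2*(j+1) := by ring
        _ ≤ _ := this)
    (fun u h1 h2 => murphy_fT n Q.length ℓ u hm h1 h2)).2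
  have hfq : fQvec n Q ℓ = tauQAux 1 Q (fT n Q.length ℓ) := rfl
  have hgam : gammaQ Q = gamAux 1 Q := gammaQ_eq_gamAux Q
  constructor
  · rw [hfq, key, hgam]
  · rw [hfq, key, hgam, innerPi_fT_val n Q.length ℓ hm]
    ring
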